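/- For each n ≥ 1 there exist n rational numbers 1 < f_1 < ... < f_n = 1 + 1/4^n, each of description size at most 4^{n²+n}, such that the description size of f = (f_n)^{2^n} · ... · (f_2)^{2^2} · (f_1)^{2^1} is at most 4^{2(n²+n)}. -/

import Mathlib

/-- The description size of a rational: the maximum of the absolute value of the
numerator and the denominator of its irreducible form. -/
def descSize (q : ℚ) : ℕ := max q.num.natAbs q.den

namespace Stmt12

/-- Scale exponents. -/
def DD (n k : ℕ) : ℕ := 2 * n + 4 * k
def EE (n k : ℕ) : ℕ := 2 * n + 4 * k - 4
def BB (n k : ℕ) : ℕ := 2 * n + k + 1 + EE n k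

/-- The chain of approximate repeated squarings of `4^n + 1` at scale `2^(DD n k)`. -/
def M (n : ℕ) : ℕ → ℕ
  | 0 => 4 ^ n + 1
  | k + 1 => (M n k) ^ 2 * (2 ^ (2 * n + k + 1) + 1) / 2 ^ (BB n k) + 1

/-- `G n k ≈ (1 + 4⁻ⁿ)^(2^k)`. -/
def G (n k : ℕ) : ℚ := (M n k : ℚ) / 2 ^ (DD n k)

/-- The fractions. -/
def F (n : ℕ) : ℕ → ℚ
  | 0 => G n 0
  | k + 1 => G n (k + 1) / (G n k) ^ 2

lemma M_pos (n k : ℕ) : 0 < M n k := by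
  cases k <;> simp [M]

lemma KL (n k : ℕ) :
    (M n k) ^ 2 * (2 ^ (2 * n + k + 1) + 1) < 2 ^ (BB n k) * M n (k + 1) := by
  have hc : 0 < 2 ^ (BB n k) := Nat.pow_pos (by norm_num)
  set a := (M n k) ^ 2 * (2 ^ (2 * n + k + 1) + 1) with ha
  have hM : M n (k + 1) = a / 2 ^ (BB n k) + 1 := rfl
  rw [hM, Nat.mul_add, Nat.mul_one]
  have h1 := Nat.div_add_mod a (2 ^ (BB n k))
  have h2 := Nat.mod_lt a hc
  omega

lemma KU (n k : ℕ) :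
    2 ^ (BB n k) * M n (k + 1) ≤ (M n k) ^ 2 * (2 ^ (2 * n + k + 1) + 1) + 2 ^ (BB n k) := by
  set a := (M n k) ^ 2 * (2 ^ (2 * n + k + 1) + 1) with ha
  have hM : M n (k + 1) = a / 2 ^ (BB n k) + 1 := rfl
  rw [hM, Nat.mul_add, Nat.mul_one]
  have h1 := Nat.div_add_mod a (2 ^ (BB n k))
  omega

/-- Lower bound `2^(DD n k) < M n k`. -/
lemma M_lb (n : ℕ) (hn : 2 ≤ n) : ∀ k, 2 ^ (DD n k) < M n k := by
  intro k
  induction k with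
  | zero =>
    have h : (2 : ℕ) ^ (2 * n) = 4 ^ n := by rw [pow_mul]; norm_num
    show 2 ^ (2 * n + 4 * 0) < 4 ^ n + 1
    simp [h]
  | succ k ih =>
    have hkey : 2 ^ (2 * (DD n k) + (2 * n + k + 1)) < 2 ^ (BB n k) * M n (k + 1) := by
      calc 2 ^ (2 * (DD n k) + (2 * n + k + 1))
          = (2 ^ (DD n k)) ^ 2 * 2 ^ (2 * n + k + 1) := by
            rw [pow_add, pow_mul']
        _ < (M n k) ^ 2 * 2 ^ (2 * n + k + 1) := by
            have h := Nat.pow_lt_pow_left ih (n := 2) (by norm_num)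
            exact Nat.mul_lt_mul_of_lt_of_le h le_rfl (Nat.pow_pos (by norm_num))
        _ ≤ (M n k) ^ 2 * (2 ^ (2 * n + k + 1) + 1) := by
            exact Nat.mul_le_mul_left _ (by omega)
        _ < 2 ^ (BB n k) * M n (k + 1) := KL n k
    have hexp : 2 * (DD n k) + (2 * n + k + 1) = BB n k + DD n (k + 1) := by
      unfold DD BB EE; omega
    rw [hexp, pow_add] at hkey
    exact Nat.lt_of_mul_lt_mul_left hkey

/-- Bernoulli-type upper bound. -/
lemma bern2 (x : ℚ) (hx : 0 ≤ x) : ∀ m : ℕ, 2 * m * x ≤ 1 → (1 + x) ^ m ≤ 1 + 2 * m * x := by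
  intro m
  induction m with
  | zero => simp
  | succ m ih =>
    intro h
    have hm : 2 * (m : ℚ) * x ≤ 1 := by
      push_cast at h ⊢
      nlinarith
    have ih' := ih hm
    have h1 : (0 : ℚ) ≤ 1 + x := by linarith
    have h2 : (1 + x) ^ (m + 1) = (1 + x) ^ m * (1 + x) := by ring
    rw [h2]
    have h3 : (1 + x) ^ m * (1 + x) ≤ (1 + 2 * m * x) * (1 + x) := by
      apply mul_le_mul_of_nonneg_right ih' h1
    push_cast
    nlinarith

def eexp (k : ℕ) : ℕ := 2 ^ (k + 2) - (k + 3)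

lemma eexp_succ (k : ℕ) : eexp (k + 1) = 2 * eexp k + (k + 2) := by
  have h1 : k + 3 ≤ 2 ^ (k + 2) := by
    have := Nat.lt_two_pow_self (n := k + 2)
    omega
  have h2 : (2 : ℕ) ^ (k + 1 + 2) = 2 * 2 ^ (k + 2) := by rw [pow_succ]; ring
  unfold eexp
  omega

lemma M_inv (n : ℕ) (hn : 2 ≤ n) :
    ∀ k, (M n k : ℚ) ≤ 2 ^ (DD n k) * (1 + 1 / 4 ^ n) ^ (eexp k) := by
  intro k
  set x : ℚ := 1 / 4 ^ n with hxdef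
  have hx0 : 0 ≤ x := by positivity
  induction k with
  | zero =>
    show ((4 ^ n + 1 : ℕ) : ℚ) ≤ 2 ^ (2 * n + 4 * 0) * (1 + x) ^ (eexp 0)
    have he : eexp 0 = 1 := rfl
    have h : (2 : ℚ) ^ (2 * n + 4 * 0) = 4 ^ n := by
      rw [show 2 * n + 4 * 0 = 2 * n by ring, pow_mul]; norm_num
    rw [he, pow_one, h, hxdef]
    push_cast
    have h4 : (0 : ℚ) < 4 ^ n := by positivity
    rw [mul_add, mul_one, mul_one_div, div_self h4.ne']
  | succ k ih =>
    have hMk : (0 : ℚ) < (M n k : ℚ) := by exact_mod_cast M_pos n k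
    have hKU : (2 : ℚ) ^ (BB n k) * (M n (k + 1) : ℚ) ≤
        (M n k : ℚ) ^ 2 * (2 ^ (2 * n + k + 1) + 1) + 2 ^ (BB n k) := by
      exact_mod_cast KU n k
    set y : ℚ := 1 / 2 ^ (2 * n + k + 1) with hydef
    set u : ℚ := (1 + x) ^ (2 * eexp k) with hudef
    set v : ℚ := (1 + x) ^ (k + 2) with hvdef
    have hu1 : (1 : ℚ) ≤ u := one_le_pow₀ (by linarith)
    have hsq : (M n k : ℚ) ^ 2 ≤ 2 ^ (2 * DD n k) * u := by
      have h := pow_le_pow_left₀ hMk.le ih 2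
      calc (M n k : ℚ) ^ 2 ≤ (2 ^ (DD n k) * (1 + x) ^ (eexp k)) ^ 2 := h
        _ = 2 ^ (2 * DD n k) * u := by
            rw [mul_pow, ← pow_mul, ← pow_mul, hudef, Nat.mul_comm (DD n k) 2,
              Nat.mul_comm (eexp k) 2]
    have hv : 1 + ((k : ℚ) + 2) * x ≤ v := by
      have h := one_add_mul_le_pow (a := x) (by linarith) (k + 2)
      rw [hvdef]
      push_cast at h
      linarith
    have hyx : y ≤ x := by
      rw [hydef, hxdef]
      have h4 : (4 : ℚ) ^ n = 2 ^ (2 * n) := by rw [pow_mul]; norm_num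
      rw [h4]
      apply one_div_le_one_div_of_le (by positivity)
      apply pow_le_pow_right₀ (by norm_num) (by omega)
    have hy0 : 0 < y := by rw [hydef]; positivity
    have hDx : (1 : ℚ) ≤ 2 ^ (DD n (k + 1)) * x := by
      have h4 : (4 : ℚ) ^ n = 2 ^ (2 * n) := by rw [pow_mul]; norm_num
      have hD : DD n (k + 1) = 2 * n + (4 * k + 4) := by unfold DD; omega
      rw [hxdef, h4, hD, pow_add]
      have h5 : (2 : ℚ) ^ (2 * n) ≠ 0 := by positivity
      field_simp
      exact one_le_pow₀ (by norm_num)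
    have h1 : (2 : ℚ) ^ (BB n k) * 2 ^ (DD n (k + 1)) = 2 ^ (2 * DD n k) * 2 ^ (2 * n + k + 1) := by
      rw [← pow_add, ← pow_add]; congr 1; unfold DD BB EE; omega
    have h3 : (2 : ℚ) ^ (2 * n + k + 1) * y = 1 := by
      rw [hydef]; field_simp
    have hid : (2 : ℚ) ^ (2 * DD n k) * (2 ^ (2 * n + k + 1) + 1) =
        2 ^ (BB n k) * (2 ^ (DD n (k + 1)) * (1 + y)) := by
      have h2 : (2 : ℚ) ^ (BB n k) * (2 ^ (DD n (k + 1)) * (1 + y)) =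
          2 ^ (2 * DD n k) * 2 ^ (2 * n + k + 1) * (1 + y) := by
        rw [← mul_assoc, h1]
      rw [h2]
      linear_combination (-(2 : ℚ) ^ (2 * DD n k)) * h3
    have hBBpos : (0 : ℚ) < 2 ^ (BB n k) := by positivity
    have hDpos : (0 : ℚ) < 2 ^ (DD n (k + 1)) := by positivity
    have hfin : 2 ^ (DD n (k + 1)) * u * (1 + y) + 1 ≤ 2 ^ (DD n (k + 1)) * (u * v) := by
      have hstep : x ≤ ((k : ℚ) + 2) * x - y := by
        have hk0 : (0 : ℚ) ≤ (k : ℚ) := by positivity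
        nlinarith
      have e1 : 2 ^ (DD n (k + 1)) * x ≤ 2 ^ (DD n (k + 1)) * (u * (((k : ℚ) + 2) * x - y)) := by
        have : (1 : ℚ) * x ≤ u * (((k : ℚ) + 2) * x - y) := by
          apply mul_le_mul hu1 hstep (by nlinarith) (by linarith)
        calc 2 ^ (DD n (k + 1)) * x = 2 ^ (DD n (k + 1)) * (1 * x) := by ring
          _ ≤ _ := by exact mul_le_mul_of_nonneg_left this hDpos.le
      have e2 : u * (1 + y) + u * (((k : ℚ) + 2) * x - y) = u * (1 + ((k : ℚ) + 2) * x) := by ring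
      have e3 : u * (1 + ((k : ℚ) + 2) * x) ≤ u * v := by
        apply mul_le_mul_of_nonneg_left hv (by linarith)
      nlinarith [mul_le_mul_of_nonneg_left e3 hDpos.le]
    have heq : (1 + x) ^ (eexp (k + 1)) = u * v := by
      rw [eexp_succ, pow_add, hudef, hvdef]
    rw [heq]
    have hmain : (2 : ℚ) ^ (BB n k) * (M n (k + 1) : ℚ) ≤
        2 ^ (BB n k) * (2 ^ (DD n (k + 1)) * (u * v)) := by
      calc (2 : ℚ) ^ (BB n k) * (M n (k + 1) : ℚ)
          ≤ (M n k : ℚ) ^ 2 * (2 ^ (2 * n + k + 1) + 1) + 2 ^ (BB n k) := hKU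
        _ ≤ 2 ^ (2 * DD n k) * u * (2 ^ (2 * n + k + 1) + 1) + 2 ^ (BB n k) := by
            have : (M n k : ℚ) ^ 2 * (2 ^ (2 * n + k + 1) + 1) ≤
                2 ^ (2 * DD n k) * u * (2 ^ (2 * n + k + 1) + 1) := by
              apply mul_le_mul_of_nonneg_right hsq (by positivity)
            linarith
        _ = 2 ^ (BB n k) * (2 ^ (DD n (k + 1)) * u * (1 + y) + 1) := by
            linear_combination u * hid
        _ ≤ 2 ^ (BB n k) * (2 ^ (DD n (k + 1)) * (u * v)) := by
            apply mul_le_mul_of_nonneg_left hfin hBBpos.le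
    exact le_of_mul_le_mul_left hmain hBBpos


/-- Upper bound `M n k ≤ 2^(DD n k + 1)`. -/
lemma M_ub (n k : ℕ) (hn : 2 ≤ n) (hk : k + 3 ≤ 2 * n) : M n k ≤ 2 ^ (DD n k + 1) := by
  set x : ℚ := 1 / 4 ^ n with hxdef
  have hx0 : 0 ≤ x := by positivity
  have h1 := M_inv n hn k
  have hex : 2 * (eexp k) * x ≤ 1 := by
    have he : (eexp k : ℚ) ≤ 2 ^ (k + 2) := by
      have : eexp k ≤ 2 ^ (k + 2) := Nat.sub_le _ _
      exact_mod_cast this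
    have h4 : (4 : ℚ) ^ n = 2 ^ (2 * n) := by rw [pow_mul]; norm_num
    have hp : (2 : ℚ) ^ (k + 3) ≤ 2 ^ (2 * n) := pow_le_pow_right₀ (by norm_num) hk
    have hxe : x * 2 ^ (2 * n) = 1 := by rw [hxdef, h4]; field_simp
    have h2 : (2 : ℚ) ^ (k + 3) = 2 * 2 ^ (k + 2) := by rw [pow_succ]; ring
    nlinarith [pow_pos (show (0:ℚ) < 2 by norm_num) (2 * n)]
  have h2 := bern2 x hx0 (eexp k) hex
  have h3 : (M n k : ℚ) ≤ 2 ^ (DD n k) * 2 := by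
    calc (M n k : ℚ) ≤ 2 ^ (DD n k) * (1 + x) ^ (eexp k) := h1
      _ ≤ 2 ^ (DD n k) * (1 + 2 * (eexp k) * x) := by
          apply mul_le_mul_of_nonneg_left h2 (by positivity)
      _ ≤ 2 ^ (DD n k) * 2 := by
          apply mul_le_mul_of_nonneg_left (by linarith) (by positivity)
  have h4 : (M n k : ℚ) ≤ 2 ^ (DD n k + 1) := by rw [pow_succ]; exact h3
  exact_mod_cast h4

lemma M_ub0 (n : ℕ) : M n 0 ≤ 2 ^ (DD n 0 + 1) := by
  have h : (2 : ℕ) ^ (2 * n + 1) = 2 * 4 ^ n := by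
    rw [pow_succ, pow_mul]; ring_nf
  show 4 ^ n + 1 ≤ 2 ^ (2 * n + 4 * 0 + 1)
  have h1 : 1 ≤ 4 ^ n := Nat.one_le_pow _ _ (by norm_num)
  simp only [Nat.mul_zero, Nat.add_zero]
  omega

lemma F_eq (n k : ℕ) (hn : 2 ≤ n) :
    F n (k + 1) = ((M n (k + 1) * 2 ^ (EE n k) : ℕ) : ℚ) / ((M n k ^ 2 : ℕ) : ℚ) := by
  have hMk : (0 : ℚ) < (M n k : ℚ) := by exact_mod_cast M_pos n k
  have hMk1 : (0 : ℚ) < (M n (k + 1) : ℚ) := by exact_mod_cast M_pos n (k + 1)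
  have h2 : (2 : ℚ) ^ (DD n (k + 1)) * 2 ^ (EE n k) = 2 ^ (DD n k * 2) := by
    rw [← pow_add]; congr 1; unfold DD EE; omega
  show G n (k + 1) / (G n k) ^ 2 = _
  unfold G
  push_cast
  rw [div_pow, ← pow_mul, Nat.mul_comm (DD n k) 2]
  rw [div_div_div_eq]
  rw [div_eq_div_iff (by positivity) (by positivity)]
  linear_combination (-(M n (k + 1) : ℚ) * (M n k : ℚ) ^ 2) * h2

lemma F_lb (n k : ℕ) (hn : 2 ≤ n) : 1 + (1 : ℚ) / 2 ^ (2 * n + k + 1) < F n (k + 1) := by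
  have hMk := M_pos n k
  have hB : (0 : ℚ) < ((M n k ^ 2 : ℕ) : ℚ) := by
    have : 0 < M n k ^ 2 := by positivity
    exact_mod_cast this
  have h2c : (0 : ℚ) < 2 ^ (2 * n + k + 1) := by positivity
  have KLQ : ((M n k : ℚ)) ^ 2 * (2 ^ (2 * n + k + 1) + 1) <
      2 ^ (BB n k) * (M n (k + 1) : ℚ) := by exact_mod_cast KL n k
  have hBB : (2 : ℚ) ^ (BB n k) = 2 ^ (2 * n + k + 1) * 2 ^ (EE n k) := by rw [← pow_add]; rfl
  rw [F_eq n k hn, lt_div_iff₀ hB]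
  have heq : (1 + 1 / (2 : ℚ) ^ (2 * n + k + 1)) * ((M n k ^ 2 : ℕ) : ℚ) * 2 ^ (2 * n + k + 1)
      = ((M n k : ℚ)) ^ 2 * (2 ^ (2 * n + k + 1) + 1) := by
    push_cast
    field_simp
  have hgt : ((M n (k + 1) * 2 ^ (EE n k) : ℕ) : ℚ) * 2 ^ (2 * n + k + 1)
      = 2 ^ (BB n k) * (M n (k + 1) : ℚ) := by
    push_cast
    rw [hBB]
    ring
  have final : (1 + 1 / (2 : ℚ) ^ (2 * n + k + 1)) * ((M n k ^ 2 : ℕ) : ℚ) * 2 ^ (2 * n + k + 1)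
      < ((M n (k + 1) * 2 ^ (EE n k) : ℕ) : ℚ) * 2 ^ (2 * n + k + 1) := by
    rw [heq, hgt]; exact KLQ
  exact lt_of_mul_lt_mul_right final h2c.le

lemma F_ub (n k : ℕ) (hn : 2 ≤ n) : F n (k + 1) < 1 + (1 : ℚ) / 2 ^ (2 * n + k) := by
  have hMk := M_pos n k
  have hB : (0 : ℚ) < ((M n k ^ 2 : ℕ) : ℚ) := by
    have : 0 < M n k ^ 2 := by positivity
    exact_mod_cast this
  have h2c : (0 : ℚ) < 2 ^ (2 * n + k + 1) := by positivity
  have KUQ : (2 : ℚ) ^ (BB n k) * (M n (k + 1) : ℚ) ≤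
      ((M n k : ℚ)) ^ 2 * (2 ^ (2 * n + k + 1) + 1) + 2 ^ (BB n k) := by exact_mod_cast KU n k
  have hBlt : (2 : ℚ) ^ (BB n k) < ((M n k : ℚ)) ^ 2 := by
    have h1 := M_lb n hn k
    have h2 : (2 ^ (DD n k)) ^ 2 < M n k ^ 2 := Nat.pow_lt_pow_left h1 (by norm_num)
    have h3 : (2 : ℕ) ^ (BB n k) ≤ (2 ^ (DD n k)) ^ 2 := by
      rw [← pow_mul]
      apply Nat.pow_le_pow_right (by norm_num)
      unfold BB DD EE
      omega
    have h4 : (2 : ℕ) ^ (BB n k) < M n k ^ 2 := lt_of_le_of_lt h3 h2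
    exact_mod_cast h4
  have hBB : (2 : ℚ) ^ (BB n k) = 2 ^ (2 * n + k + 1) * 2 ^ (EE n k) := by rw [← pow_add]; rfl
  rw [F_eq n k hn, div_lt_iff₀ hB]
  have heq : (1 + 1 / (2 : ℚ) ^ (2 * n + k)) * ((M n k ^ 2 : ℕ) : ℚ) * 2 ^ (2 * n + k + 1)
      = ((M n k : ℚ)) ^ 2 * 2 ^ (2 * n + k + 1) + 2 * ((M n k : ℚ)) ^ 2 := by
    push_cast
    rw [pow_succ]
    field_simp
    ring
  have hgt : ((M n (k + 1) * 2 ^ (EE n k) : ℕ) : ℚ) * 2 ^ (2 * n + k + 1)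
      = 2 ^ (BB n k) * (M n (k + 1) : ℚ) := by
    push_cast
    rw [hBB]
    ring
  have final : ((M n (k + 1) * 2 ^ (EE n k) : ℕ) : ℚ) * 2 ^ (2 * n + k + 1)
      < (1 + 1 / (2 : ℚ) ^ (2 * n + k)) * ((M n k ^ 2 : ℕ) : ℚ) * 2 ^ (2 * n + k + 1) := by
    rw [heq, hgt]
    calc (2 : ℚ) ^ (BB n k) * (M n (k + 1) : ℚ)
        ≤ ((M n k : ℚ)) ^ 2 * (2 ^ (2 * n + k + 1) + 1) + 2 ^ (BB n k) := KUQ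
      _ < ((M n k : ℚ)) ^ 2 * 2 ^ (2 * n + k + 1) + 2 * ((M n k : ℚ)) ^ 2 := by nlinarith
  exact lt_of_mul_lt_mul_right final h2c.le

lemma F0_eq (n : ℕ) : F n 0 = 1 + 1 / 4 ^ n := by
  show G n 0 = _
  unfold G
  have h : (2 : ℚ) ^ (DD n 0) = 4 ^ n := by
    unfold DD
    rw [show 2 * n + 4 * 0 = 2 * n by ring, pow_mul]; norm_num
  rw [h]
  have h4 : (0 : ℚ) < 4 ^ n := by positivity
  show ((4 ^ n + 1 : ℕ) : ℚ) / 4 ^ n = _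
  push_cast
  rw [add_div, div_self h4.ne']

lemma F_one_lt (n k : ℕ) (hn : 2 ≤ n) : 1 < F n k := by
  cases k with
  | zero =>
    rw [F0_eq]
    have : (0 : ℚ) < 1 / 4 ^ n := by positivity
    linarith
  | succ k =>
    have h := F_lb n k hn
    have : (0 : ℚ) < 1 / 2 ^ (2 * n + k + 1) := by positivity
    linarith

lemma F_anti (n : ℕ) (hn : 2 ≤ n) {a b : ℕ} (hab : b < a) : F n a < F n b := by
  obtain ⟨a', rfl⟩ : ∃ a', a = a' + 1 := ⟨a - 1, by omega⟩
  have h1 := F_ub n a' hn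
  have hmono : ∀ s t : ℕ, s ≤ t → (1 : ℚ) / 2 ^ t ≤ 1 / 2 ^ s := by
    intro s t hst
    apply one_div_le_one_div_of_le (by positivity)
    exact pow_le_pow_right₀ (by norm_num) hst
  cases b with
  | zero =>
    rw [F0_eq]
    have h4 : (4 : ℚ) ^ n = 2 ^ (2 * n) := by rw [pow_mul]; norm_num
    have h5 := hmono (2 * n) (2 * n + a') (by omega)
    rw [h4]
    linarith
  | succ b' =>
    have h2 := F_lb n b' hn
    have h5 := hmono (2 * n + b' + 1) (2 * n + a') (by omega)
    linarith

lemma G_pos (n k : ℕ) : 0 < G n k := by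
  have := M_pos n k
  unfold G
  positivity

lemma prod_T (n : ℕ) : ∀ j, j < n →
    ∏ k ∈ Finset.range (j + 1), F n k ^ (2 ^ (n - k)) = (G n j) ^ (2 ^ (n - j)) := by
  intro j
  induction j with
  | zero =>
    intro _
    rw [Finset.prod_range_one]
    rfl
  | succ j ih =>
    intro hj
    rw [Finset.prod_range_succ, ih (by omega)]
    have hj2 : n - j = (n - (j + 1)) + 1 := by omega
    rw [hj2, pow_succ, Nat.mul_comm, pow_mul]
    show (G n j ^ 2) ^ 2 ^ (n - (j + 1)) * (G n (j + 1) / G n j ^ 2) ^ 2 ^ (n - (j + 1)) = _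
    rw [← mul_pow, mul_comm, div_mul_cancel₀]
    exact ne_of_gt (pow_pos (G_pos n j) 2)

lemma prod_main (n : ℕ) (hn : 1 ≤ n) :
    ∏ i : Fin n, (F n (n - 1 - i.1)) ^ (2 ^ (i.1 + 1)) = (G n (n - 1)) ^ 2 := by
  have h1 : ∏ i : Fin n, (F n (n - 1 - i.1)) ^ (2 ^ (i.1 + 1)) =
      ∏ i ∈ Finset.range n, (F n (n - 1 - i)) ^ (2 ^ (i + 1)) :=
    Fin.prod_univ_eq_prod_range (fun i => (F n (n - 1 - i)) ^ (2 ^ (i + 1))) n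
  rw [h1]
  have h2 : ∏ i ∈ Finset.range n, (F n (n - 1 - i)) ^ (2 ^ (i + 1)) =
      ∏ i ∈ Finset.range n, (F n (n - 1 - i)) ^ (2 ^ (n - (n - 1 - i))) := by
    apply Finset.prod_congr rfl
    intro i hi
    rw [Finset.mem_range] at hi
    congr 2
    omega
  rw [h2]
  rw [Finset.prod_range_reflect (fun k => F n k ^ (2 ^ (n - k))) n]
  have h4 := prod_T n (n - 1) (by omega)
  rw [show (n - 1) + 1 = n by omega] at h4
  rw [show n - (n - 1) = 1 by omega, pow_one] at h4
  exact h4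

lemma descSize_div_le (a b : ℕ) (hb : 0 < b) : descSize ((a : ℚ) / (b : ℚ)) ≤ max a b := by
  rcases Nat.eq_zero_or_pos a with ha | ha
  · subst ha
    simp [descSize]
    omega
  · have hbz : ((b : ℤ)) ≠ 0 := by exact_mod_cast hb.ne'
    have h1 : ((a : ℚ) / (b : ℚ)) = (((a : ℤ) : ℚ)) / (((b : ℤ) : ℚ)) := by push_cast; ring
    have hnum : ((a : ℚ) / (b : ℚ)).num ∣ (a : ℤ) := by
      rw [h1, ← Rat.divInt_eq_div]
      exact Rat.num_dvd _ hbz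
    have hden : ((((a : ℚ) / (b : ℚ)).den : ℤ)) ∣ (b : ℤ) := by
      rw [h1, ← Rat.divInt_eq_div]
      exact Rat.den_dvd _ _
    have h2 : ((a : ℚ) / (b : ℚ)).num.natAbs ≤ a := by
      have hd := Int.natAbs_dvd_natAbs.2 hnum
      simp only [Int.natAbs_natCast] at hd
      exact Nat.le_of_dvd ha hd
    have h3 : ((a : ℚ) / (b : ℚ)).den ≤ b := by
      have hd : ((a : ℚ) / (b : ℚ)).den ∣ b := by exact_mod_cast hden
      exact Nat.le_of_dvd hb hd
    simp only [descSize]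
    omega

end Stmt12

/-- Lemma on fractions: there are n rationals 1 < f₁ < ... < fₙ = 1 + 1/4ⁿ of description
size at most 4^(n²+n) whose product of powers f = Π fᵢ^(2ⁱ) has description size at most
4^(2(n²+n)). -/
theorem stmt_12 (n : ℕ) (hn : 1 ≤ n) :
    ∃ f : Fin n → ℚ,
      (∀ i : Fin n, 1 < f i) ∧
      StrictMono f ∧
      f ⟨n - 1, by omega⟩ = 1 + 1 / 4 ^ n ∧
      (∀ i : Fin n, descSize (f i) ≤ 4 ^ (n ^ 2 + n)) ∧
      descSize (∏ i : Fin n, (f i) ^ (2 ^ (i.1 + 1))) ≤ 4 ^ (2 * (n ^ 2 + n)) := by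
  refine ⟨fun i => Stmt12.F n (n - 1 - i.1), ?_, ?_, ?_, ?_, ?_⟩
  · -- all greater than 1
    intro i
    show 1 < Stmt12.F n (n - 1 - i.1)
    rcases Nat.eq_zero_or_pos (n - 1 - i.1) with h | h
    · rw [h, Stmt12.F0_eq]
      have : (0 : ℚ) < 1 / 4 ^ n := by positivity
      linarith
    · have hn2 : 2 ≤ n := by omega
      exact Stmt12.F_one_lt n _ hn2
  · -- strictly monotone
    intro i j hij
    have hij' : i.1 < j.1 := hij
    have hj := j.2
    have hn2 : 2 ≤ n := by omega
    exact Stmt12.F_anti n hn2 (by omega : n - 1 - j.1 < n - 1 - i.1)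
  · -- top value
    show Stmt12.F n (n - 1 - (n - 1)) = _
    rw [show n - 1 - (n - 1) = 0 by omega, Stmt12.F0_eq]
  · -- description sizes
    intro i
    show descSize (Stmt12.F n (n - 1 - i.1)) ≤ 4 ^ (n ^ 2 + n)
    have h4pow : (4 : ℕ) ^ (n ^ 2 + n) = 2 ^ (2 * (n ^ 2 + n)) := by
      rw [show (4 : ℕ) = 2 ^ 2 by norm_num, ← pow_mul]
    rcases Nat.eq_zero_or_pos (n - 1 - i.1) with h | h
    · rw [h]
      have he : Stmt12.F n 0 = ((4 ^ n + 1 : ℕ) : ℚ) / ((4 ^ n : ℕ) : ℚ) := by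
        rw [Stmt12.F0_eq]
        have h4 : (0 : ℚ) < 4 ^ n := by positivity
        push_cast
        rw [add_div, div_self h4.ne']
      rw [he]
      have hd := Stmt12.descSize_div_le (4 ^ n + 1) (4 ^ n) (by positivity)
      have h1 : (4 : ℕ) ^ n + 1 ≤ 4 ^ (n + 1) := by
        have h2 : 1 ≤ (4 : ℕ) ^ n := Nat.one_le_pow _ _ (by norm_num)
        have h3 : (4 : ℕ) ^ (n + 1) = 4 * 4 ^ n := by ring
        omega
      have h3 : (4 : ℕ) ^ (n + 1) ≤ 4 ^ (n ^ 2 + n) := by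
        apply Nat.pow_le_pow_right (by norm_num)
        nlinarith
      omega
    · have hn2 : 2 ≤ n := by omega
      obtain ⟨m, hm⟩ : ∃ m, n - 1 - i.1 = m + 1 := ⟨n - 1 - i.1 - 1, by omega⟩
      have hmn : m + 2 ≤ n := by omega
      rw [hm, Stmt12.F_eq n m hn2]
      have hMm := Stmt12.M_pos n m
      have hd := Stmt12.descSize_div_le (Stmt12.M n (m + 1) * 2 ^ (Stmt12.EE n m))
        (Stmt12.M n m ^ 2) (by positivity)
      have hub1 : Stmt12.M n (m + 1) ≤ 2 ^ (Stmt12.DD n (m + 1) + 1) :=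
        Stmt12.M_ub n (m + 1) hn2 (by omega)
      have hub0 : Stmt12.M n m ≤ 2 ^ (Stmt12.DD n m + 1) :=
        Stmt12.M_ub n m hn2 (by omega)
      have hnum : Stmt12.M n (m + 1) * 2 ^ (Stmt12.EE n m) ≤ 2 ^ (4 * n + 8 * m + 1) := by
        calc Stmt12.M n (m + 1) * 2 ^ (Stmt12.EE n m)
            ≤ 2 ^ (Stmt12.DD n (m + 1) + 1) * 2 ^ (Stmt12.EE n m) :=
              Nat.mul_le_mul_right _ hub1
          _ = 2 ^ ((Stmt12.DD n (m + 1) + 1) + Stmt12.EE n m) := (pow_add _ _ _).symm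
          _ = 2 ^ (4 * n + 8 * m + 1) := by
              congr 1
              unfold Stmt12.DD Stmt12.EE
              omega
      have hden : Stmt12.M n m ^ 2 ≤ 2 ^ (4 * n + 8 * m + 2) := by
        calc Stmt12.M n m ^ 2 ≤ (2 ^ (Stmt12.DD n m + 1)) ^ 2 := Nat.pow_le_pow_left hub0 2
          _ = 2 ^ (4 * n + 8 * m + 2) := by
              rw [← pow_mul]
              congr 1
              unfold Stmt12.DD
              ring
      have hexp : 4 * n + 8 * m + 2 ≤ 2 * (n ^ 2 + n) := by
        zify at hmn hn2 ⊢
        nlinarith [sq_nonneg ((n : ℤ) - 3), hmn, hn2]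
      have hfin1 : (2 : ℕ) ^ (4 * n + 8 * m + 1) ≤ 2 ^ (2 * (n ^ 2 + n)) :=
        Nat.pow_le_pow_right (by norm_num) (by omega)
      have hfin2 : (2 : ℕ) ^ (4 * n + 8 * m + 2) ≤ 2 ^ (2 * (n ^ 2 + n)) :=
        Nat.pow_le_pow_right (by norm_num) hexp
      rw [h4pow]
      omega
  · -- description size of the product
    rw [Stmt12.prod_main n hn]
    have hG : (Stmt12.G n (n - 1)) ^ 2 =
        ((Stmt12.M n (n - 1) ^ 2 : ℕ) : ℚ) / ((2 ^ (Stmt12.DD n (n - 1) * 2) : ℕ) : ℚ) := by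
      unfold Stmt12.G
      push_cast
      rw [div_pow, ← pow_mul]
    rw [hG]
    have hd := Stmt12.descSize_div_le (Stmt12.M n (n - 1) ^ 2)
      (2 ^ (Stmt12.DD n (n - 1) * 2)) (by positivity)
    have hub : Stmt12.M n (n - 1) ≤ 2 ^ (Stmt12.DD n (n - 1) + 1) := by
      rcases Nat.lt_or_ge n 2 with h | h
      · have hn1 : n = 1 := by omega
        subst hn1
        exact Stmt12.M_ub0 1
      · exact Stmt12.M_ub n (n - 1) h (by omega)
    have hnum : Stmt12.M n (n - 1) ^ 2 ≤ 2 ^ (Stmt12.DD n (n - 1) * 2 + 2) := by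
      calc Stmt12.M n (n - 1) ^ 2 ≤ (2 ^ (Stmt12.DD n (n - 1) + 1)) ^ 2 :=
            Nat.pow_le_pow_left hub 2
        _ = 2 ^ (Stmt12.DD n (n - 1) * 2 + 2) := by
            rw [← pow_mul]
            congr 1
            ring
    have hDD : Stmt12.DD n (n - 1) = 6 * n - 4 := by unfold Stmt12.DD; omega
    have hexp : Stmt12.DD n (n - 1) * 2 + 2 ≤ 4 * (n ^ 2 + n) := by
      rw [hDD]
      have h6 : 4 ≤ 6 * n := by omega
      zify [h6]
      nlinarith [sq_nonneg ((n : ℤ) - 1), (by exact_mod_cast hn : (1 : ℤ) ≤ (n : ℤ))]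
    have hfin1 : (2 : ℕ) ^ (Stmt12.DD n (n - 1) * 2 + 2) ≤ 2 ^ (4 * (n ^ 2 + n)) :=
      Nat.pow_le_pow_right (by norm_num) hexp
    have hfin2 : (2 : ℕ) ^ (Stmt12.DD n (n - 1) * 2) ≤ 2 ^ (4 * (n ^ 2 + n)) :=
      Nat.pow_le_pow_right (by norm_num) (by omega)
    have h4pow : (4 : ℕ) ^ (2 * (n ^ 2 + n)) = 2 ^ (4 * (n ^ 2 + n)) := by
      rw [show (4 : ℕ) = 2 ^ 2 by norm_num, ← pow_mul]
      congr 1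
      ring
    rw [h4pow]
    omega
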